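/- Let X ∈ R^{n×r}, let X̄ = X O₁ where O₁ ∈ O(r) minimizes ‖U − XO‖_F over O ∈ O(r), and let H = U − X̄. Then the matrix Hᵀ X̄ is symmetric. -/

import Mathlib

open Matrix

section aux
variable {r : ℕ}

lemma sum_support_pair {f : Fin r → ℝ} {i j : Fin r} (hij : i ≠ j)
    (h : ∀ c, c ≠ i → c ≠ j → f c = 0) : ∑ c, f c = f i + f j := by
  rw [← Finset.sum_pair hij]
  refine (Finset.sum_subset (Finset.subset_univ _) ?_).symm
  intro c _ hc
  simp only [Finset.mem_insert, Finset.mem_singleton, not_or] at hc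
  exact h c hc.1 hc.2

/-- plane rotation matrix -/
def rot (i j : Fin r) (c s : ℝ) : Matrix (Fin r) (Fin r) ℝ :=
  Matrix.of fun a b =>
    if a = i then (if b = i then c else if b = j then -s else 0)
    else if a = j then (if b = i then s else if b = j then c else 0)
    else (if a = b then 1 else 0)

lemma rot_orth {i j : Fin r} (hij : i ≠ j) {c s : ℝ} (hcs : c ^ 2 + s ^ 2 = 1) :
    rot i j c s * (rot i j c s)ᵀ = 1 := by
  have hji : ¬ j = i := fun h => hij h.symm
  ext a b
  rw [Matrix.mul_apply]
  by_cases hgen : ¬a = i ∧ ¬a = j ∧ ¬b = i ∧ ¬b = j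
  · obtain ⟨hai, haj, hbi, hbj⟩ := hgen
    rw [Finset.sum_eq_single a (fun m _ hma => by
      simp [rot, hai, haj, Ne.symm hma]) (by simp)]
    simp only [rot, of_apply, transpose_apply, one_apply, if_neg hai, if_neg haj,
      if_neg hbi, if_neg hbj, if_pos rfl, one_mul]
    by_cases hab : a = b
    · simp [hab]
    · simp [hab]
      exact fun h => hab h.symm
  · rw [sum_support_pair hij (fun m hmi hmj => ?_)]
    · simp only [rot, of_apply, transpose_apply, one_apply]
      by_cases hai : a = i
      · by_cases hbi : b = i
        · simp [hai, hbi, hij, hji]; nlinarith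
        · by_cases hbj : b = j
          · simp [hai, hbj, hij, hji]; ring
          · simp [hai, hbi, hbj, hij, hji]
            exact fun h => hbi h.symm
      · by_cases haj : a = j
        · by_cases hbi : b = i
          · simp [haj, hbi, hai, hij, hji]; ring
          · by_cases hbj : b = j
            · simp [haj, hbj, hai, hij, hji]; nlinarith
            · simp [haj, hai, hbi, hbj, hij, hji]
              exact fun h => hbj h.symm
        · by_cases hbi : b = i
          · simp [hai, haj, hbi, hij, hji, (fun h : a = b => hai (h.trans hbi)),
              (fun h : i = a => hai h.symm), (fun h : j = a => haj h.symm)]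
          · by_cases hbj : b = j
            · simp [hai, haj, hbi, hbj, hij, hji, (fun h : a = b => haj (h.trans hbj)),
                (fun h : i = a => hai h.symm), (fun h : j = a => haj h.symm)]
            · exact absurd ⟨hai, haj, hbi, hbj⟩ hgen
    · simp only [rot, of_apply, transpose_apply]
      by_cases hai : a = i
      · simp [hai, hmi, hmj]
      · by_cases haj : a = j
        · simp [haj, hai, hmi, hmj]
        · by_cases hbi : b = i
          · simp [hbi, hmi, hmj]
          · by_cases hbj : b = j
            · simp [hbj, hbi, hmi, hmj]
            · exact absurd ⟨hai, haj, hbi, hbj⟩ hgen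
end aux

section aux2
variable {r : ℕ}

lemma trace_mul_rot (A : Matrix (Fin r) (Fin r) ℝ) {i j : Fin r} (hij : i ≠ j) (c s : ℝ) :
    trace (A * rot i j c s)
      = trace A + ((c - 1) * (A i i + A j j) + s * (A i j - A j i)) := by
  have hji : ¬ j = i := fun h => hij h.symm
  rw [Matrix.trace_mul_comm]
  have hi : (rot i j c s * A) i i = c * A i i + (-s) * A j i := by
    rw [Matrix.mul_apply]
    rw [sum_support_pair hij (fun k hki hkj => by simp [rot, hki, hkj])]
    simp [rot, hij, hji]
  have hj : (rot i j c s * A) j j = s * A i j + c * A j j := by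
    rw [Matrix.mul_apply]
    rw [sum_support_pair hij (fun k hki hkj => by simp [rot, hki, hkj, hji])]
    simp [rot, hij, hji]
  have key : trace (rot i j c s * A) - trace A
      = ((c - 1) * (A i i + A j j) + s * (A i j - A j i)) := by
    rw [Matrix.trace, Matrix.trace, ← Finset.sum_sub_distrib]
    rw [sum_support_pair hij (fun m hmi hmj => ?_)]
    · simp only [Matrix.diag_apply, hi, hj]; ring
    · have hmm : (rot i j c s * A) m m = A m m := by
        rw [Matrix.mul_apply]
        rw [Finset.sum_eq_single m
          (fun k _ hkm => by
            simp only [rot, of_apply, if_neg hmi, if_neg hmj, ite_mul, one_mul, zero_mul]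
            exact if_neg (fun h => hkm h.symm))
          (by simp)]
        simp [rot, hmi, hmj]
      simp [Matrix.diag_apply, hmm]
  linarith [key]

end aux2

/-- If `O₁` is orthogonal and minimizes `‖U − XO‖_F` over the orthogonal group,
and `X̄ = XO₁`, `H = U − X̄`, then `Hᵀ X̄` is symmetric. -/
theorem H_transpose_Xbar_symm (n r : ℕ) (X U : Matrix (Fin n) (Fin r) ℝ)
    (O₁ : Matrix (Fin r) (Fin r) ℝ) (hO₁ : O₁ * O₁ᵀ = 1)
    (hmin : ∀ O : Matrix (Fin r) (Fin r) ℝ, O * Oᵀ = 1 →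
      Real.sqrt (∑ i, ∑ j, ((U - X * O₁) i j) ^ 2)
        ≤ Real.sqrt (∑ i, ∑ j, ((U - X * O) i j) ^ 2)) :
    ((U - X * O₁)ᵀ * (X * O₁)).IsSymm := by
  -- abbreviations
  set A : Matrix (Fin r) (Fin r) ℝ := Uᵀ * (X * O₁) with hA
  -- ∑∑ squares = trace (Mᵀ M)
  have hsq : ∀ M : Matrix (Fin n) (Fin r) ℝ,
      ∑ i, ∑ j, (M i j) ^ 2 = trace (Mᵀ * M) := by
    intro M
    rw [Finset.sum_comm]
    simp [Matrix.trace, Matrix.diag, Matrix.mul_apply, sq]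
  -- frobenius expansion
  have expand : ∀ O : Matrix (Fin r) (Fin r) ℝ, O * Oᵀ = 1 →
      ∑ i, ∑ j, ((U - X * O) i j) ^ 2
        = trace (Uᵀ * U) + trace (Xᵀ * X) - 2 * trace (Uᵀ * (X * O)) := by
    intro O hO
    rw [hsq]
    have h1 : (U - X * O)ᵀ * (U - X * O)
        = Uᵀ * U - Uᵀ * (X * O) - (X * O)ᵀ * U + (X * O)ᵀ * (X * O) := by
      rw [Matrix.transpose_sub, Matrix.sub_mul, Matrix.mul_sub, Matrix.mul_sub]
      abel
    rw [h1]
    have h2 : trace ((X * O)ᵀ * (X * O)) = trace (Xᵀ * X) := by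
      rw [Matrix.transpose_mul, Matrix.mul_assoc, Matrix.trace_mul_comm,
        Matrix.mul_assoc, Matrix.mul_assoc, hO, Matrix.mul_one,
        Matrix.trace_mul_comm]
    have h3 : trace ((X * O)ᵀ * U) = trace (Uᵀ * (X * O)) := by
      rw [← Matrix.trace_transpose, Matrix.transpose_mul, Matrix.transpose_transpose]
    rw [Matrix.trace_add, Matrix.trace_sub, Matrix.trace_sub, h2, h3]
    ring
  -- trace maximality
  have frob : ∀ O : Matrix (Fin r) (Fin r) ℝ, O * Oᵀ = 1 →
      trace (Uᵀ * (X * O)) ≤ trace (Uᵀ * (X * O₁)) := by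
    intro O hO
    have h := hmin O hO
    rw [Real.sqrt_le_sqrt_iff (by positivity)] at h
    rw [expand O hO, expand O₁ hO₁] at h
    linarith
  -- key symmetry of A
  have hAsymm : ∀ i j : Fin r, A i j = A j i := by
    intro i j
    by_cases hij : i = j
    · rw [hij]
    · -- rotations
      have hrot : ∀ t : ℝ, t * (A i j - A j i) ≤ t ^ 2 * (A i i + A j j) := by
        intro t
        have hden : (0:ℝ) < 1 + t ^ 2 := by positivity
        set c : ℝ := (1 - t ^ 2) / (1 + t ^ 2) with hc
        set s : ℝ := (2 * t) / (1 + t ^ 2) with hs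
        have hcs : c ^ 2 + s ^ 2 = 1 := by
          rw [hc, hs]; field_simp; ring
        have hQ := rot_orth hij hcs
        have hOQ : (O₁ * rot i j c s) * (O₁ * rot i j c s)ᵀ = 1 := by
          rw [Matrix.transpose_mul, Matrix.mul_assoc, ← Matrix.mul_assoc (rot i j c s),
            hQ, Matrix.one_mul, hO₁]
        have h := frob (O₁ * rot i j c s) hOQ
        have hre : Uᵀ * (X * (O₁ * rot i j c s)) = A * rot i j c s := by
          rw [hA, Matrix.mul_assoc, Matrix.mul_assoc]
        rw [hre, trace_mul_rot A hij c s] at h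
        have h' : (c - 1) * (A i i + A j j) + s * (A i j - A j i) ≤ 0 := by linarith
        have hc1 : c - 1 = (-2 * t ^ 2) / (1 + t ^ 2) := by
          rw [hc]; field_simp; ring
        rw [hc1, hs] at h'
        have hmul := mul_le_mul_of_nonneg_left h' (le_of_lt hden)
        rw [mul_zero] at hmul
        have e1 : (1 + t ^ 2) * ((-2 * t ^ 2) / (1 + t ^ 2) * (A i i + A j j)
            + 2 * t / (1 + t ^ 2) * (A i j - A j i))
            = -2 * t ^ 2 * (A i i + A j j) + 2 * t * (A i j - A j i) := by
          field_simp
        linarith [hmul, e1]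
      -- conclude A i j = A j i
      set d : ℝ := A i j - A j i with hd
      set S : ℝ := A i i + A j j with hS
      have hfinal : d = 0 := by
        by_contra hd0
        rcases le_or_gt S 0 with hS0 | hS0
        · have h1 := hrot d
          have hdd : 0 < d * d := mul_self_pos.mpr hd0
          nlinarith [h1, hdd, hS0, sq_nonneg d]
        · have h2S : (2 * S) ≠ 0 := by positivity
          set u : ℝ := d / (2 * S) with hu'
          have hu : d = 2 * S * u := by rw [hu']; field_simp
          have h1 := hrot u
          have hune : u ≠ 0 := fun h => hd0 (by rw [hu, h, mul_zero])
          have huu : 0 < u * u := mul_self_pos.mpr hune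
          rw [hu] at h1
          nlinarith [h1, hS0, huu]
      linarith [hd ▸ hfinal]
  -- assemble
  have hAs : Aᵀ = A := by
    ext i j
    rw [Matrix.transpose_apply]
    exact hAsymm j i
  have hXU : (X * O₁)ᵀ * U = A := by
    rw [← hAs, hA]
    simp only [Matrix.transpose_mul, Matrix.transpose_transpose, Matrix.mul_assoc]
  show ((U - X * O₁)ᵀ * (X * O₁))ᵀ = (U - X * O₁)ᵀ * (X * O₁)
  calc ((U - X * O₁)ᵀ * (X * O₁))ᵀ
      = (X * O₁)ᵀ * (U - X * O₁) := by
        rw [Matrix.transpose_mul, Matrix.transpose_transpose]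
    _ = (X * O₁)ᵀ * U - (X * O₁)ᵀ * (X * O₁) := by rw [Matrix.mul_sub]
    _ = Uᵀ * (X * O₁) - (X * O₁)ᵀ * (X * O₁) := by rw [hXU, hA]
    _ = (U - X * O₁)ᵀ * (X * O₁) := by rw [Matrix.transpose_sub, Matrix.sub_mul]
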